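/- Consider h_sgn(x) = (π²/4)·((1+σ²)/C(Λ))·h₁(1/√x)^{-2} + (1/C(Λ))·(C₃(Λ)/C₂(Λ))·(1 − 2h₂(1/√x)/h₁(1/√x)). If x ≥ 100, then (π²/8)·((1+σ²)/C(Λ))·x + 20(1+σ²)/C(Λ) ≤ h_sgn(x) ≤ (π²/2)·((1+σ²)/C(Λ))·x + 20(1+σ²)/C(Λ). -/

import Mathlib

open MeasureTheory ProbabilityTheory
open Real Filter

/-- `φ(x) = ∫₀ˣ e^{-t²/2} dt`. -/
noncomputable def phi (x : ℝ) : ℝ := ∫ t in (0 : ℝ)..x, Real.exp (-t ^ 2 / 2)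

/-- `C₂ = E[W²/(c+W²)²]`, `W ~ N(0,1)`. -/
noncomputable def C₂ (c : ℝ) : ℝ := ∫ w, w ^ 2 / (c + w ^ 2) ^ 2 ∂(gaussianReal 0 1)

/-- `C₃ = E[W⁴/(c+W²)²]`, `W ~ N(0,1)`. -/
noncomputable def C₃ (c : ℝ) : ℝ := ∫ w, w ^ 4 / (c + w ^ 2) ^ 2 ∂(gaussianReal 0 1)

/-- `h₁(u) = Λ · E[|W| φ(u|W|)/(c + W²)]`, `W ~ N(0,1)`. -/
noncomputable def h₁ (Λ c u : ℝ) : ℝ :=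
  Λ * ∫ w, |w| * phi (u * |w|) / (c + w ^ 2) ∂(gaussianReal 0 1)

/-- `h₂(u) = C₃⁻¹ · E[|W|³ φ(u|W|)/(c+W²)²]`, `W ~ N(0,1)`. -/
noncomputable def h₂ (c u : ℝ) : ℝ :=
  (C₃ c)⁻¹ * ∫ w, |w| ^ 3 * phi (u * |w|) / (c + w ^ 2) ^ 2 ∂(gaussianReal 0 1)

/-- `h_sgn(x) = (π²/4)·((1+σ²)/c)·h₁(1/√x)⁻² + (1/c)·(C₃/C₂)·(1 − 2h₂(1/√x)/h₁(1/√x))`. -/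
noncomputable def hsgn (Λ c σ x : ℝ) : ℝ :=
  Real.pi ^ 2 / 4 * ((1 + σ ^ 2) / c) / (h₁ Λ c (1 / Real.sqrt x)) ^ 2 +
    1 / c * (C₃ c / C₂ c) * (1 - 2 * h₂ c (1 / Real.sqrt x) / h₁ Λ c (1 / Real.sqrt x))


/-- exp lower bound: for t ≥ 0, (t/4)^4 ≤ exp t -/
lemma aux_exp_ge (t : ℝ) (ht : 0 ≤ t) : t^4 / 65536 ≤ Real.exp (t/4) := by
  have h1 : t/16 + 1 ≤ Real.exp (t/16) := Real.add_one_le_exp _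
  have h2 : (t/16 + 1)^4 ≤ (Real.exp (t/16))^4 := by
    apply pow_le_pow_left₀ (by positivity) h1
  have h3 : (Real.exp (t/16))^4 = Real.exp (t/4) := by
    rw [← Real.exp_nat_mul]
    norm_num
    ring_nf
  nlinarith [sq_nonneg t, sq_nonneg (t/16), pow_nonneg ht 3, pow_nonneg ht 4]

lemma aux_abs_pow_le (x : ℝ) (k : ℕ) (hk : k ≤ 8) : |x|^k ≤ 1 + x^8 := by
  rcases le_total (|x|) 1 with h | h
  · have : |x|^k ≤ 1 := pow_le_one₀ (abs_nonneg x) h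
    nlinarith [sq_nonneg (x^4)]
  · have h1 : |x|^k ≤ |x|^8 := pow_le_pow_right₀ h hk
    have h2 : |x|^8 = x^8 := by rw [← abs_pow, abs_of_nonneg (by positivity)]
    nlinarith

lemma gauss_pow_bound (x : ℝ) (k : ℕ) (hk : k ≤ 8) :
    ‖x^k * Real.exp (-x^2/2)‖ ≤ 65537 * Real.exp (-(1/4) * x^2) := by
  have h0 : 0 ≤ x^2 := sq_nonneg x
  have h1 : |x|^k ≤ 1 + x^8 := aux_abs_pow_le x k hk
  have h2 : x^8 ≤ 65536 * Real.exp (x^2/4) := by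
    have := aux_exp_ge (x^2) h0
    nlinarith
  have h3 : ‖x^k * Real.exp (-x^2/2)‖ = |x|^k * Real.exp (-x^2/2) := by
    rw [norm_mul, Real.norm_eq_abs, Real.norm_eq_abs, abs_pow,
      abs_of_nonneg (Real.exp_nonneg _)]
  rw [h3]
  have h4 : |x|^k * Real.exp (-x^2/2) ≤ (1 + 65536 * Real.exp (x^2/4)) * Real.exp (-x^2/2) := by
    apply mul_le_mul_of_nonneg_right _ (Real.exp_nonneg _)
    nlinarith
  refine h4.trans ?_
  have e1 : Real.exp (x^2/4) * Real.exp (-x^2/2) = Real.exp (-(1/4) * x^2) := by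
    rw [← Real.exp_add]; ring_nf
  have e2 : Real.exp (-x^2/2) ≤ Real.exp (-(1/4) * x^2) := by
    apply Real.exp_le_exp.mpr; nlinarith
  nlinarith [Real.exp_nonneg (-x^2/2), Real.exp_nonneg (-(1/4) * x^2), Real.exp_nonneg (x^2/4)]

lemma integrable_pow_gauss (k : ℕ) (hk : k ≤ 8) :
    Integrable (fun x : ℝ => x^k * Real.exp (-x^2/2)) := by
  apply Integrable.mono' ((integrable_exp_neg_mul_sq (by norm_num : (0:ℝ) < 1/4)).const_mul 65537)
  · exact (Continuous.mul (continuous_pow k) (Continuous.rexp (by continuity))).aestronglyMeasurable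
  · exact Filter.Eventually.of_forall (fun x => gauss_pow_bound x k hk)

lemma gauss_rec (k : ℕ) (hk : k + 2 ≤ 8) :
    ∫ x : ℝ, x^(k+2) * Real.exp (-x^2/2) = (k+1) * ∫ x : ℝ, x^k * Real.exp (-x^2/2) := by
  have i1 : Integrable (fun x : ℝ => ((k:ℝ)+1) * (x^k * Real.exp (-x^2/2))) :=
    (integrable_pow_gauss k (by omega)).const_mul _
  have i2 := integrable_pow_gauss (k+2) hk
  have hderiv : ∀ x : ℝ, HasDerivAt (fun y : ℝ => y^(k+1) * Real.exp (-y^2/2))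
      (((k:ℝ)+1) * (x^k * Real.exp (-x^2/2)) - x^(k+2) * Real.exp (-x^2/2)) x := by
    intro x
    have hexp : HasDerivAt (fun y : ℝ => Real.exp (-y^2/2)) (Real.exp (-x^2/2) * (-x)) x := by
      have h0 : HasDerivAt (fun y : ℝ => -y^2/2) (-x) x := by
        have h1 : HasDerivAt (fun y : ℝ => y^2) ((2:ℕ) * x^1) x := hasDerivAt_pow 2 x
        have h2 := (h1.neg).div_const 2
        refine h2.congr_deriv ?_
        push_cast; ring
      exact h0.exp
    have hp : HasDerivAt (fun y : ℝ => y^(k+1)) (((k:ℝ)+1) * x^k) x := by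
      have := hasDerivAt_pow (k+1) x
      simpa using this
    have := hp.mul hexp
    refine this.congr_deriv ?_
    push_cast; ring
  have hint : Integrable (fun x : ℝ =>
      ((k:ℝ)+1) * (x^k * Real.exp (-x^2/2)) - x^(k+2) * Real.exp (-x^2/2)) := i1.sub i2
  have hzero := integral_eq_zero_of_hasDerivAt_of_integrable hderiv hint
    (integrable_pow_gauss (k+1) (by omega))
  rw [integral_sub i1 i2, integral_const_mul] at hzero
  linarith

lemma gauss_J0 : ∫ x : ℝ, Real.exp (-x^2/2) = Real.sqrt (2 * Real.pi) := by
  have := integral_gaussian (1/2)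
  rw [show (fun x : ℝ => Real.exp (-(1/2) * x^2)) = fun x : ℝ => Real.exp (-x^2/2) from
    funext (fun x => by ring_nf)] at this
  rw [this]
  congr 1
  rw [div_div_eq_mul_div, div_one]
  ring

lemma gauss_J0' : ∫ x : ℝ, x^0 * Real.exp (-x^2/2) = Real.sqrt (2 * Real.pi) := by
  rw [← gauss_J0]; congr 1; funext x; ring

lemma gauss_J2 : ∫ x : ℝ, x^2 * Real.exp (-x^2/2) = Real.sqrt (2 * Real.pi) := by
  have := gauss_rec 0 (by omega)
  rw [gauss_J0'] at this
  simpa using this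

lemma gauss_J4 : ∫ x : ℝ, x^4 * Real.exp (-x^2/2) = 3 * Real.sqrt (2 * Real.pi) := by
  have := gauss_rec 2 (by omega)
  rw [gauss_J2] at this
  norm_num at this
  rw [this, Real.sqrt_mul (by norm_num : (0:ℝ) ≤ 2)]

lemma gauss_J6 : ∫ x : ℝ, x^6 * Real.exp (-x^2/2) = 15 * Real.sqrt (2 * Real.pi) := by
  have := gauss_rec 4 (by omega)
  rw [gauss_J4] at this
  norm_num at this
  rw [this, Real.sqrt_mul (by norm_num : (0:ℝ) ≤ 2)]
  ring

lemma pdf01 (x : ℝ) : gaussianPDFReal 0 1 x = (Real.sqrt (2 * Real.pi))⁻¹ * Real.exp (-x^2/2) := by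
  rw [gaussianPDFReal_def]
  norm_num

lemma gaussianReal_eq_wd :
    gaussianReal 0 1 = volume.withDensity (fun x => ((gaussianPDFReal 0 1 x).toNNReal : ENNReal)) := by
  rw [gaussianReal_of_var_ne_zero 0 one_ne_zero]
  congr 1

lemma meas_pdf : Measurable (fun x => (gaussianPDFReal 0 1 x).toNNReal) :=
  (measurable_gaussianPDFReal 0 1).real_toNNReal

lemma integral_gaussianReal_eq (g : ℝ → ℝ) :
    ∫ w, g w ∂(gaussianReal 0 1) = ∫ x, gaussianPDFReal 0 1 x * g x := by
  rw [gaussianReal_eq_wd, integral_withDensity_eq_integral_smul meas_pdf]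
  congr 1; funext x
  rw [NNReal.smul_def, smul_eq_mul, Real.coe_toNNReal _ (gaussianPDFReal_nonneg 0 1 x)]

lemma integrable_gaussianReal_iff (g : ℝ → ℝ) :
    Integrable g (gaussianReal 0 1) ↔ Integrable (fun x => gaussianPDFReal 0 1 x * g x) volume := by
  rw [gaussianReal_eq_wd, integrable_withDensity_iff_integrable_smul₀ meas_pdf.aemeasurable]
  constructor <;> intro h <;> refine h.congr (Filter.Eventually.of_forall fun x => ?_) <;>
    simp only [NNReal.smul_def, smul_eq_mul, Real.coe_toNNReal _ (gaussianPDFReal_nonneg 0 1 x)]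

lemma sqrt_two_pi_pos : 0 < Real.sqrt (2 * Real.pi) :=
  Real.sqrt_pos.mpr (by positivity)

lemma integrable_pow_gaussianReal (k : ℕ) (hk : k ≤ 8) :
    Integrable (fun w : ℝ => w ^ k) (gaussianReal 0 1) := by
  rw [integrable_gaussianReal_iff]
  have : (fun x : ℝ => gaussianPDFReal 0 1 x * x ^ k)
      = fun x : ℝ => (Real.sqrt (2 * Real.pi))⁻¹ * (x ^ k * Real.exp (-x^2/2)) := by
    funext x; rw [pdf01]; ring
  rw [this]
  exact (integrable_pow_gauss k hk).const_mul _

lemma moment_gaussianReal (k : ℕ) (hk : k ≤ 8)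
    (J : ℝ) (hJ : ∫ x : ℝ, x^k * Real.exp (-x^2/2) = J * Real.sqrt (2 * Real.pi)) :
    ∫ w, w ^ k ∂(gaussianReal 0 1) = J := by
  rw [integral_gaussianReal_eq]
  have : (fun x : ℝ => gaussianPDFReal 0 1 x * x ^ k)
      = fun x : ℝ => (Real.sqrt (2 * Real.pi))⁻¹ * (x ^ k * Real.exp (-x^2/2)) := by
    funext x; rw [pdf01]; ring
  rw [this, integral_const_mul, hJ]
  field_simp

lemma m2_eq : ∫ w, w ^ 2 ∂(gaussianReal 0 1) = 1 :=
  moment_gaussianReal 2 (by omega) 1 (by rw [gauss_J2]; ring)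

lemma m4_eq : ∫ w, w ^ 4 ∂(gaussianReal 0 1) = 3 :=
  moment_gaussianReal 4 (by omega) 3 gauss_J4

lemma m6_eq : ∫ w, w ^ 6 ∂(gaussianReal 0 1) = 15 :=
  moment_gaussianReal 6 (by omega) 15 gauss_J6

lemma exp_cont : Continuous (fun t : ℝ => Real.exp (-t ^ 2 / 2)) := by
  fun_prop

lemma phi_cont : Continuous phi :=
  intervalIntegral.continuous_primitive (fun a b => exp_cont.intervalIntegrable a b) 0

lemma phi_nonneg {t : ℝ} (ht : 0 ≤ t) : 0 ≤ phi t :=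
  intervalIntegral.integral_nonneg ht (fun x _ => Real.exp_nonneg _)

lemma phi_le {t : ℝ} (ht : 0 ≤ t) : phi t ≤ t := by
  have h := intervalIntegral.integral_mono_on (μ := volume) ht
    (exp_cont.intervalIntegrable 0 t) (intervalIntegrable_const (c := (1:ℝ)))
    (fun x _ => by
      rw [Real.exp_le_one_iff]
      nlinarith [sq_nonneg x])
  simpa [phi] using h

lemma phi_ge {t : ℝ} (ht : 0 ≤ t) : t - t ^ 3 / 6 ≤ phi t := by
  have hint : IntervalIntegrable (fun s : ℝ => 1 - s ^ 2 / 2) volume 0 t :=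
    (by continuity : Continuous (fun s : ℝ => 1 - s ^ 2 / 2)).intervalIntegrable 0 t
  have h := intervalIntegral.integral_mono_on (μ := volume) ht hint
    (exp_cont.intervalIntegrable 0 t)
    (fun x _ => by
      have := Real.add_one_le_exp (-x ^ 2 / 2)
      linarith)
  have hval : ∫ s in (0:ℝ)..t, (1 - s ^ 2 / 2) = t - t ^ 3 / 6 := by
    rw [intervalIntegral.integral_sub (intervalIntegrable_const) (by
      exact ((by continuity : Continuous (fun s : ℝ => s ^ 2 / 2)).intervalIntegrable 0 t))]
    have h2 : ∫ s in (0:ℝ)..t, s ^ 2 / 2 = (∫ s in (0:ℝ)..t, s ^ 2) / 2 :=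
      intervalIntegral.integral_div 2 _
    rw [h2, integral_pow]
    norm_num
    ring
  rw [← hval]
  simpa [phi] using h

lemma integrable_of_bound {f : ℝ → ℝ} (hf : Continuous f) (M : ℝ) (h : ∀ w, ‖f w‖ ≤ M) :
    Integrable f (gaussianReal 0 1) :=
  Integrable.mono' (integrable_const M) hf.aestronglyMeasurable (Filter.Eventually.of_forall h)

lemma cw_pos {c : ℝ} (hc : 0 < c) (w : ℝ) : 0 < c + w ^ 2 := by positivity

lemma intF1 {c : ℝ} (hc : 0 < c) :
    Integrable (fun w : ℝ => w ^ 2 / (c + w ^ 2)) (gaussianReal 0 1) := by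
  apply integrable_of_bound (by
    exact (continuous_pow 2).div (by continuity) (fun w => (cw_pos hc w).ne')) 1
  intro w
  rw [Real.norm_eq_abs, abs_of_nonneg (div_nonneg (by positivity) (cw_pos hc w).le)]
  rw [div_le_one (cw_pos hc w)]
  nlinarith

lemma intF2 {c : ℝ} (hc : 0 < c) :
    Integrable (fun w : ℝ => w ^ 4 / (c + w ^ 2)) (gaussianReal 0 1) := by
  apply Integrable.mono' (integrable_pow_gaussianReal 2 (by omega))
  · exact ((continuous_pow 4).div (by continuity) (fun w => (cw_pos hc w).ne')).aestronglyMeasurable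
  · refine Filter.Eventually.of_forall (fun w => ?_)
    rw [Real.norm_eq_abs, abs_of_nonneg (div_nonneg (by positivity) (cw_pos hc w).le),
      div_le_iff₀ (cw_pos hc w)]
    nlinarith [sq_nonneg w, sq_nonneg (w^2)]

lemma intF3 {c : ℝ} (hc : 0 < c) :
    Integrable (fun w : ℝ => w ^ 2 / (c + w ^ 2) ^ 2) (gaussianReal 0 1) := by
  apply integrable_of_bound (by
    exact (continuous_pow 2).div (by continuity) (fun w => (pow_pos (cw_pos hc w) 2).ne')) (1/c)
  intro w
  rw [Real.norm_eq_abs, abs_of_nonneg (div_nonneg (by positivity) (pow_pos (cw_pos hc w) 2).le),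
    div_le_div_iff₀ (pow_pos (cw_pos hc w) 2) hc]
  nlinarith [sq_nonneg w, sq_nonneg (w^2), cw_pos hc w]

lemma intF4 {c : ℝ} (hc : 0 < c) :
    Integrable (fun w : ℝ => w ^ 4 / (c + w ^ 2) ^ 2) (gaussianReal 0 1) := by
  apply integrable_of_bound (by
    exact (continuous_pow 4).div (by continuity) (fun w => (pow_pos (cw_pos hc w) 2).ne')) 1
  intro w
  rw [Real.norm_eq_abs, abs_of_nonneg (div_nonneg (by positivity) (pow_pos (cw_pos hc w) 2).le),
    div_le_one (pow_pos (cw_pos hc w) 2)]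
  nlinarith [sq_nonneg w, sq_nonneg (w^2)]

lemma intF5 {c : ℝ} (hc : 0 < c) :
    Integrable (fun w : ℝ => w ^ 6 / (c + w ^ 2) ^ 2) (gaussianReal 0 1) := by
  apply Integrable.mono' (integrable_pow_gaussianReal 2 (by omega))
  · exact ((continuous_pow 6).div (by continuity)
      (fun w => (pow_pos (cw_pos hc w) 2).ne')).aestronglyMeasurable
  · refine Filter.Eventually.of_forall (fun w => ?_)
    rw [Real.norm_eq_abs, abs_of_nonneg (div_nonneg (by positivity) (pow_pos (cw_pos hc w) 2).le),
      div_le_iff₀ (pow_pos (cw_pos hc w) 2)]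
    nlinarith [mul_nonneg (sq_nonneg w) (mul_pos hc hc).le, mul_nonneg (mul_nonneg hc.le (sq_nonneg w)) (sq_nonneg (w^2))]

lemma contG1 {c u : ℝ} (hc : 0 < c) :
    Continuous (fun w : ℝ => |w| * phi (u * |w|) / (c + w ^ 2)) :=
  (continuous_abs.mul (phi_cont.comp (continuous_const.mul continuous_abs))).div
    (by continuity) (fun w => (cw_pos hc w).ne')

lemma contG2 {c u : ℝ} (hc : 0 < c) :
    Continuous (fun w : ℝ => |w| ^ 3 * phi (u * |w|) / (c + w ^ 2) ^ 2) :=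
  ((continuous_abs.pow 3).mul (phi_cont.comp (continuous_const.mul continuous_abs))).div
    (by continuity) (fun w => (pow_pos (cw_pos hc w) 2).ne')

lemma G1_pt_le {c u : ℝ} (hc : 0 < c) (hu : 0 ≤ u) (w : ℝ) :
    |w| * phi (u * |w|) / (c + w ^ 2) ≤ u * (w ^ 2 / (c + w ^ 2)) := by
  have hnum : |w| * phi (u * |w|) ≤ u * w ^ 2 := by
    have h1 : |w| * phi (u * |w|) ≤ |w| * (u * |w|) :=
      mul_le_mul_of_nonneg_left (phi_le (by positivity)) (abs_nonneg w)
    have h2 : |w| * (u * |w|) = u * |w| ^ 2 := by ring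
    rw [h2, sq_abs] at h1
    exact h1
  rw [mul_div_assoc']
  gcongr

lemma G1_pt_nonneg {c u : ℝ} (hc : 0 < c) (hu : 0 ≤ u) (w : ℝ) :
    0 ≤ |w| * phi (u * |w|) / (c + w ^ 2) :=
  div_nonneg (mul_nonneg (abs_nonneg w) (phi_nonneg (by positivity))) (cw_pos hc w).le

lemma G1_pt_ge {c u : ℝ} (hc : 0 < c) (hu : 0 ≤ u) (w : ℝ) :
    u * (w ^ 2 / (c + w ^ 2)) - u ^ 3 / 6 * (w ^ 4 / (c + w ^ 2))
      ≤ |w| * phi (u * |w|) / (c + w ^ 2) := by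
  have hnum : u * w ^ 2 - u ^ 3 / 6 * w ^ 4 ≤ |w| * phi (u * |w|) := by
    have h1 : |w| * (u * |w| - (u * |w|) ^ 3 / 6) ≤ |w| * phi (u * |w|) :=
      mul_le_mul_of_nonneg_left (phi_ge (by positivity)) (abs_nonneg w)
    have h2 : |w| * (u * |w| - (u * |w|) ^ 3 / 6)
        = u * |w| ^ 2 - u ^ 3 / 6 * (|w| ^ 2) ^ 2 := by ring
    rw [h2, sq_abs] at h1
    calc u * w ^ 2 - u ^ 3 / 6 * w ^ 4 = u * w ^ 2 - u ^ 3 / 6 * (w ^ 2) ^ 2 := by ring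
      _ ≤ |w| * phi (u * |w|) := h1
  have e : u * (w ^ 2 / (c + w ^ 2)) - u ^ 3 / 6 * (w ^ 4 / (c + w ^ 2))
      = (u * w ^ 2 - u ^ 3 / 6 * w ^ 4) / (c + w ^ 2) := by ring
  rw [e]
  gcongr

lemma intG1 {c u : ℝ} (hc : 0 < c) (hu : 0 ≤ u) :
    Integrable (fun w : ℝ => |w| * phi (u * |w|) / (c + w ^ 2)) (gaussianReal 0 1) := by
  apply integrable_of_bound (contG1 hc) u
  intro w
  rw [Real.norm_eq_abs, abs_of_nonneg (G1_pt_nonneg hc hu w)]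
  refine (G1_pt_le hc hu w).trans ?_
  have h1 : w ^ 2 / (c + w ^ 2) ≤ 1 := by
    rw [div_le_one (cw_pos hc w)]; linarith [hc]
  nlinarith [div_nonneg (sq_nonneg w) (cw_pos hc w).le]

lemma G2_pt_le {c u : ℝ} (hc : 0 < c) (hu : 0 ≤ u) (w : ℝ) :
    |w| ^ 3 * phi (u * |w|) / (c + w ^ 2) ^ 2 ≤ u * (w ^ 4 / (c + w ^ 2) ^ 2) := by
  have hnum : |w| ^ 3 * phi (u * |w|) ≤ u * w ^ 4 := by
    have h1 : |w| ^ 3 * phi (u * |w|) ≤ |w| ^ 3 * (u * |w|) :=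
      mul_le_mul_of_nonneg_left (phi_le (by positivity)) (by positivity)
    have h2 : |w| ^ 3 * (u * |w|) = u * (|w| ^ 2) ^ 2 := by ring
    rw [h2, sq_abs] at h1
    calc |w| ^ 3 * phi (u * |w|) ≤ u * (w ^ 2) ^ 2 := h1
      _ = u * w ^ 4 := by ring
  rw [mul_div_assoc']
  gcongr

lemma G2_pt_nonneg {c u : ℝ} (hc : 0 < c) (hu : 0 ≤ u) (w : ℝ) :
    0 ≤ |w| ^ 3 * phi (u * |w|) / (c + w ^ 2) ^ 2 :=
  div_nonneg (mul_nonneg (by positivity) (phi_nonneg (by positivity)))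
    (pow_pos (cw_pos hc w) 2).le

lemma G2_pt_ge {c u : ℝ} (hc : 0 < c) (hu : 0 ≤ u) (w : ℝ) :
    u * (w ^ 4 / (c + w ^ 2) ^ 2) - u ^ 3 / 6 * (w ^ 6 / (c + w ^ 2) ^ 2)
      ≤ |w| ^ 3 * phi (u * |w|) / (c + w ^ 2) ^ 2 := by
  have hnum : u * w ^ 4 - u ^ 3 / 6 * w ^ 6 ≤ |w| ^ 3 * phi (u * |w|) := by
    have h1 : |w| ^ 3 * (u * |w| - (u * |w|) ^ 3 / 6) ≤ |w| ^ 3 * phi (u * |w|) :=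
      mul_le_mul_of_nonneg_left (phi_ge (by positivity)) (by positivity)
    have h2 : |w| ^ 3 * (u * |w| - (u * |w|) ^ 3 / 6)
        = u * (|w| ^ 2) ^ 2 - u ^ 3 / 6 * (|w| ^ 2) ^ 3 := by ring
    rw [h2, sq_abs] at h1
    calc u * w ^ 4 - u ^ 3 / 6 * w ^ 6
        = u * (w ^ 2) ^ 2 - u ^ 3 / 6 * (w ^ 2) ^ 3 := by ring
      _ ≤ |w| ^ 3 * phi (u * |w|) := h1
  have e : u * (w ^ 4 / (c + w ^ 2) ^ 2) - u ^ 3 / 6 * (w ^ 6 / (c + w ^ 2) ^ 2)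
      = (u * w ^ 4 - u ^ 3 / 6 * w ^ 6) / (c + w ^ 2) ^ 2 := by ring
  rw [e]
  gcongr

lemma intG2 {c u : ℝ} (hc : 0 < c) (hu : 0 ≤ u) :
    Integrable (fun w : ℝ => |w| ^ 3 * phi (u * |w|) / (c + w ^ 2) ^ 2) (gaussianReal 0 1) := by
  apply integrable_of_bound (contG2 hc) u
  intro w
  rw [Real.norm_eq_abs, abs_of_nonneg (G2_pt_nonneg hc hu w)]
  refine (G2_pt_le hc hu w).trans ?_
  have h1 : w ^ 4 / (c + w ^ 2) ^ 2 ≤ 1 := by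
    rw [div_le_one (pow_pos (cw_pos hc w) 2)]
    nlinarith [sq_nonneg w, sq_nonneg (w ^ 2), mul_pos hc hc, mul_nonneg hc.le (sq_nonneg w)]
  nlinarith [div_nonneg (by positivity : (0:ℝ) ≤ w ^ 4) (pow_pos (cw_pos hc w) 2).le]

lemma E4_le {c : ℝ} (hc : 0 < c) : ∫ w, w ^ 4 / (c + w ^ 2) ∂(gaussianReal 0 1) ≤ 3 / c := by
  have h := integral_mono (intF2 hc) ((integrable_pow_gaussianReal 4 (by omega)).div_const c)
    (fun w => by
      dsimp only
      gcongr <;> first | positivity | nlinarith [sq_nonneg w])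
  rw [integral_div, m4_eq] at h
  exact h

lemma C3_le {c : ℝ} (hc : 0 < c) : C₃ c ≤ 3 / c ^ 2 := by
  have h := integral_mono (intF4 hc) ((integrable_pow_gaussianReal 4 (by omega)).div_const (c^2))
    (fun w => by
      dsimp only
      gcongr <;> first | positivity | nlinarith [sq_nonneg w])
  rw [integral_div, m4_eq] at h
  exact h

lemma E6_le {c : ℝ} (hc : 0 < c) :
    ∫ w, w ^ 6 / (c + w ^ 2) ^ 2 ∂(gaussianReal 0 1) ≤ 15 / c ^ 2 := by
  have h := integral_mono (intF5 hc) ((integrable_pow_gaussianReal 6 (by omega)).div_const (c^2))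
    (fun w => by
      dsimp only
      gcongr <;> first | positivity | nlinarith [sq_nonneg w])
  rw [integral_div, m6_eq] at h
  exact h

lemma amgm (a b l : ℝ) (hl : 0 < l) : a * b ≤ l / 2 * a ^ 2 + 1 / (2 * l) * b ^ 2 := by
  have h := sq_nonneg (l * a - b)
  have h2 : 0 < 2 * l := by linarith
  rw [← sub_nonneg]
  have e : l / 2 * a ^ 2 + 1 / (2 * l) * b ^ 2 - a * b
      = (l * a - b) ^ 2 / (2 * l) := by field_simp; ring
  rw [e]
  positivity

lemma C2_ge {Λ c : ℝ} (hc : 0 < c) (hΛ : 0 < Λ)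
    (hI : ∫ w, w ^ 2 / (c + w ^ 2) ∂(gaussianReal 0 1) = 1 / Λ) : 1 / Λ ^ 2 ≤ C₂ c := by
  have pw : ∀ w : ℝ, w ^ 2 / (c + w ^ 2)
      ≤ 1 / (2 * Λ) * w ^ 2 + Λ / 2 * (w ^ 2 / (c + w ^ 2) ^ 2) := by
    intro w
    have h := amgm |w| (|w| / (c + w ^ 2)) (1 / Λ) (by positivity)
    have e1 : |w| * (|w| / (c + w ^ 2)) = w ^ 2 / (c + w ^ 2) := by
      rw [mul_div_assoc', ← sq, sq_abs]
    have e2 : (|w| / (c + w ^ 2)) ^ 2 = w ^ 2 / (c + w ^ 2) ^ 2 := by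
      rw [div_pow, sq_abs]
    have e3 : (1 : ℝ) / Λ / 2 = 1 / (2 * Λ) := by ring
    have e4 : 1 / (2 * (1 / Λ)) = Λ / 2 := by field_simp
    rw [e1, e2, e3, e4, sq_abs] at h
    exact h
  have hg1 : Integrable (fun w : ℝ => 1 / (2 * Λ) * w ^ 2) (gaussianReal 0 1) := by
    exact (integrable_pow_gaussianReal 2 (by omega)).const_mul _
  have hg2 : Integrable (fun w : ℝ => Λ / 2 * (w ^ 2 / (c + w ^ 2) ^ 2)) (gaussianReal 0 1) := by
    exact (intF3 hc).const_mul _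
  have hg : Integrable
      (fun w : ℝ => 1 / (2 * Λ) * w ^ 2 + Λ / 2 * (w ^ 2 / (c + w ^ 2) ^ 2))
      (gaussianReal 0 1) := by exact hg1.add hg2
  have h := integral_mono (intF1 hc) hg pw
  rw [hI, integral_add hg1 hg2, integral_const_mul, integral_const_mul, m2_eq] at h
  have hC2 : 1 / (2 * Λ) ≤ Λ / 2 * C₂ c := by
    unfold C₂
    have : (1:ℝ) / Λ - 1 / (2 * Λ) = 1 / (2 * Λ) := by field_simp; ring
    nlinarith [h]
  rw [div_le_iff₀ (pow_pos hΛ 2)]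
  rw [div_le_iff₀ (by positivity : (0:ℝ) < 2 * Λ)] at hC2
  nlinarith [hC2]

lemma C3_ge {Λ c : ℝ} (hc : 0 < c) (hΛ : 0 < Λ)
    (hI : ∫ w, w ^ 2 / (c + w ^ 2) ∂(gaussianReal 0 1) = 1 / Λ) : 1 / Λ ^ 2 ≤ C₃ c := by
  have pw : ∀ w : ℝ, w ^ 2 / (c + w ^ 2)
      ≤ 1 / (2 * Λ) + Λ / 2 * (w ^ 4 / (c + w ^ 2) ^ 2) := by
    intro w
    have h := amgm 1 (w ^ 2 / (c + w ^ 2)) (1 / Λ) (by positivity)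
    have e2 : (w ^ 2 / (c + w ^ 2)) ^ 2 = w ^ 4 / (c + w ^ 2) ^ 2 := by
      rw [div_pow]; ring_nf
    have e4 : 1 / (2 * (1 / Λ)) = Λ / 2 := by field_simp
    rw [e2, e4] at h
    calc w ^ 2 / (c + w ^ 2) = 1 * (w ^ 2 / (c + w ^ 2)) := by ring
      _ ≤ 1 / Λ / 2 * 1 ^ 2 + Λ / 2 * (w ^ 4 / (c + w ^ 2) ^ 2) := h
      _ = 1 / (2 * Λ) + Λ / 2 * (w ^ 4 / (c + w ^ 2) ^ 2) := by ring
  have hg1 : Integrable (fun _ : ℝ => 1 / (2 * Λ)) (gaussianReal 0 1) := integrable_const _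
  have hg2 : Integrable (fun w : ℝ => Λ / 2 * (w ^ 4 / (c + w ^ 2) ^ 2)) (gaussianReal 0 1) := by
    exact (intF4 hc).const_mul _
  have hg : Integrable
      (fun w : ℝ => 1 / (2 * Λ) + Λ / 2 * (w ^ 4 / (c + w ^ 2) ^ 2))
      (gaussianReal 0 1) := by exact hg1.add hg2
  have h := integral_mono (intF1 hc) hg pw
  rw [hI, integral_add hg1 hg2, integral_const_mul,
    integral_const, probReal_univ, one_smul] at h
  have hC3 : 1 / (2 * Λ) ≤ Λ / 2 * C₃ c := by
    unfold C₃
    have : (1:ℝ) / Λ - 1 / (2 * Λ) = 1 / (2 * Λ) := by field_simp; ring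
    nlinarith [h]
  rw [div_le_iff₀ (pow_pos hΛ 2)]
  rw [div_le_iff₀ (by positivity : (0:ℝ) < 2 * Λ)] at hC3
  nlinarith [hC3]

lemma c_ge_4 {Λ c : ℝ} (hΛ : 10 ≤ Λ) (hc : 0 < c)
    (hfix : 1 / Λ = ∫ w, w ^ 2 / (c + w ^ 2) ∂(gaussianReal 0 1)) : 4 ≤ c := by
  by_contra hlt
  push_neg at hlt
  have hΛ0 : (0:ℝ) < Λ := by linarith
  have pw : ∀ w : ℝ, w ^ 2 / 8 - w ^ 4 / 128 ≤ w ^ 2 / (c + w ^ 2) := by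
    intro w
    have hpos := cw_pos hc w
    rw [← sub_nonneg]
    have e : w ^ 2 / (c + w ^ 2) - (w ^ 2 / 8 - w ^ 4 / 128)
        = (w ^ 2 * (128 - (16 - w ^ 2) * (c + w ^ 2))) / (128 * (c + w ^ 2)) := by
      field_simp
      ring
    rw [e]
    apply div_nonneg _ (by positivity)
    have h2 : (16 - w ^ 2) * (c + w ^ 2) ≤ 128 := by nlinarith [sq_nonneg (w ^ 2 - 6), sq_nonneg w]
    nlinarith [sq_nonneg w]
  have hint : Integrable (fun w : ℝ => w ^ 2 / 8 - w ^ 4 / 128) (gaussianReal 0 1) :=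
    ((integrable_pow_gaussianReal 2 (by omega)).div_const 8).sub
      ((integrable_pow_gaussianReal 4 (by omega)).div_const 128)
  have h := integral_mono hint (intF1 hc) pw
  rw [← hfix, integral_sub ((integrable_pow_gaussianReal 2 (by omega)).div_const 8)
    ((integrable_pow_gaussianReal 4 (by omega)).div_const 128), integral_div, integral_div,
    m2_eq, m4_eq] at h
  have hle : 1 / Λ ≤ 1 / 10 := by
    rw [div_le_div_iff₀ hΛ0 (by norm_num)]
    linarith
  rw [one_div] at hle
  norm_num at h
  linarith

lemma Lam_le_4c {Λ c : ℝ} (hΛ : 10 ≤ Λ) (hc : 0 < c)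
    (hfix : 1 / Λ = ∫ w, w ^ 2 / (c + w ^ 2) ∂(gaussianReal 0 1)) : Λ ≤ 4 * c := by
  have hc4 := c_ge_4 hΛ hc hfix
  have hΛ0 : (0:ℝ) < Λ := by linarith
  have pw : ∀ w : ℝ, w ^ 2 / c - w ^ 4 / c ^ 2 ≤ w ^ 2 / (c + w ^ 2) := by
    intro w
    have hpos := cw_pos hc w
    rw [← sub_nonneg]
    have e : w ^ 2 / (c + w ^ 2) - (w ^ 2 / c - w ^ 4 / c ^ 2)
        = (w ^ 2 * w ^ 4) / (c ^ 2 * (c + w ^ 2)) := by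
      field_simp
      ring
    rw [e]
    positivity
  have hint : Integrable (fun w : ℝ => w ^ 2 / c - w ^ 4 / c ^ 2) (gaussianReal 0 1) :=
    ((integrable_pow_gaussianReal 2 (by omega)).div_const c).sub
      ((integrable_pow_gaussianReal 4 (by omega)).div_const (c ^ 2))
  have h := integral_mono hint (intF1 hc) pw
  rw [← hfix, integral_sub ((integrable_pow_gaussianReal 2 (by omega)).div_const c)
    ((integrable_pow_gaussianReal 4 (by omega)).div_const (c ^ 2)), integral_div, integral_div,
    m2_eq, m4_eq] at h
  have key : 1 / (4 * c) ≤ 1 / Λ := by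
    refine le_trans ?_ h
    rw [div_sub_div _ _ (by positivity : c ≠ 0) (by positivity : c ^ 2 ≠ 0),
      div_le_div_iff₀ (by positivity) (by positivity)]
    nlinarith
  rw [div_le_div_iff₀ (by positivity) hΛ0] at key
  linarith

lemma h1_le {Λ c u : ℝ} (hc : 0 < c) (hΛ0 : 0 < Λ) (hu : 0 ≤ u)
    (hI : ∫ w, w ^ 2 / (c + w ^ 2) ∂(gaussianReal 0 1) = 1 / Λ) : h₁ Λ c u ≤ u := by
  have h := integral_mono (intG1 hc hu) ((intF1 hc).const_mul u) (G1_pt_le hc hu)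
  rw [integral_const_mul, hI] at h
  unfold h₁
  calc Λ * ∫ w, |w| * phi (u * |w|) / (c + w ^ 2) ∂(gaussianReal 0 1)
      ≤ Λ * (u * (1 / Λ)) := by
        exact mul_le_mul_of_nonneg_left h hΛ0.le
    _ = u := by field_simp

lemma h1_ge {Λ c u : ℝ} (hc : 0 < c) (hΛ0 : 0 < Λ) (hu : 0 ≤ u) (h4c : Λ ≤ 4 * c)
    (hI : ∫ w, w ^ 2 / (c + w ^ 2) ∂(gaussianReal 0 1) = 1 / Λ) :
    u - 2 * u ^ 3 ≤ h₁ Λ c u := by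
  have hg1 : Integrable (fun w : ℝ => u * (w ^ 2 / (c + w ^ 2))) (gaussianReal 0 1) := by
    exact (intF1 hc).const_mul u
  have hg2 : Integrable (fun w : ℝ => u ^ 3 / 6 * (w ^ 4 / (c + w ^ 2))) (gaussianReal 0 1) := by
    exact (intF2 hc).const_mul _
  have hlhs : Integrable
      (fun w : ℝ => u * (w ^ 2 / (c + w ^ 2)) - u ^ 3 / 6 * (w ^ 4 / (c + w ^ 2)))
      (gaussianReal 0 1) := by exact hg1.sub hg2
  have h := integral_mono hlhs (intG1 hc hu) (G1_pt_ge hc hu)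
  rw [integral_sub hg1 hg2, integral_const_mul, integral_const_mul, hI] at h
  have hE4 := E4_le hc
  have hE4nn : 0 ≤ ∫ w, w ^ 4 / (c + w ^ 2) ∂(gaussianReal 0 1) :=
    integral_nonneg (fun w => div_nonneg (by positivity) (cw_pos hc w).le)
  unfold h₁
  have step : Λ * (u * (1 / Λ) - u ^ 3 / 6 * ∫ w, w ^ 4 / (c + w ^ 2) ∂(gaussianReal 0 1))
      ≤ Λ * ∫ w, |w| * phi (u * |w|) / (c + w ^ 2) ∂(gaussianReal 0 1) :=
    mul_le_mul_of_nonneg_left h hΛ0.le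
  refine le_trans ?_ step
  have e1 : Λ * (u * (1 / Λ) - u ^ 3 / 6 * ∫ w, w ^ 4 / (c + w ^ 2) ∂(gaussianReal 0 1))
      = u - Λ * (u ^ 3 / 6) * ∫ w, w ^ 4 / (c + w ^ 2) ∂(gaussianReal 0 1) := by
    field_simp
  rw [e1]
  have hb : Λ * (u ^ 3 / 6) * (∫ w, w ^ 4 / (c + w ^ 2) ∂(gaussianReal 0 1)) ≤ 2 * u ^ 3 := by
    calc Λ * (u ^ 3 / 6) * (∫ w, w ^ 4 / (c + w ^ 2) ∂(gaussianReal 0 1))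
        ≤ Λ * (u ^ 3 / 6) * (3 / c) := by
          apply mul_le_mul_of_nonneg_left hE4 (by positivity)
      _ = Λ / c * (u ^ 3 / 2) := by field_simp; ring
      _ ≤ 4 * (u ^ 3 / 2) := by
          apply mul_le_mul_of_nonneg_right _ (by positivity)
          rw [div_le_iff₀ hc]; linarith
      _ = 2 * u ^ 3 := by ring
  linarith

lemma h2_le {c u : ℝ} (hc : 0 < c) (hu : 0 ≤ u) (hC3 : 0 < C₃ c) : h₂ c u ≤ u := by
  have h := integral_mono (intG2 hc hu) ((intF4 hc).const_mul u) (G2_pt_le hc hu)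
  rw [integral_const_mul] at h
  unfold h₂
  calc (C₃ c)⁻¹ * ∫ w, |w| ^ 3 * phi (u * |w|) / (c + w ^ 2) ^ 2 ∂(gaussianReal 0 1)
      ≤ (C₃ c)⁻¹ * (u * C₃ c) := by
        apply mul_le_mul_of_nonneg_left _ (inv_nonneg.mpr hC3.le)
        exact h
    _ = u := by field_simp

lemma h2_ge {Λ c u : ℝ} (hc : 0 < c) (hΛ0 : 0 < Λ) (hu : 0 ≤ u) (h4c : Λ ≤ 4 * c)
    (hC3 : 1 / Λ ^ 2 ≤ C₃ c) : u - 40 * u ^ 3 ≤ h₂ c u := by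
  have hC3pos : 0 < C₃ c := lt_of_lt_of_le (by positivity) hC3
  have hg1 : Integrable (fun w : ℝ => u * (w ^ 4 / (c + w ^ 2) ^ 2)) (gaussianReal 0 1) := by
    exact (intF4 hc).const_mul u
  have hg2 : Integrable (fun w : ℝ => u ^ 3 / 6 * (w ^ 6 / (c + w ^ 2) ^ 2)) (gaussianReal 0 1) := by
    exact (intF5 hc).const_mul _
  have hlhs : Integrable
      (fun w : ℝ => u * (w ^ 4 / (c + w ^ 2) ^ 2) - u ^ 3 / 6 * (w ^ 6 / (c + w ^ 2) ^ 2))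
      (gaussianReal 0 1) := by exact hg1.sub hg2
  have h := integral_mono hlhs (intG2 hc hu) (G2_pt_ge hc hu)
  rw [integral_sub hg1 hg2, integral_const_mul, integral_const_mul] at h
  set E6 := ∫ w, w ^ 6 / (c + w ^ 2) ^ 2 ∂(gaussianReal 0 1) with hE6def
  have hE6 : E6 ≤ 15 / c ^ 2 := E6_le hc
  have hE6nn : 0 ≤ E6 :=
    integral_nonneg (fun w => div_nonneg (by positivity) (pow_pos (cw_pos hc w) 2).le)
  have hstep : (C₃ c)⁻¹ * (u * C₃ c - u ^ 3 / 6 * E6) ≤ h₂ c u := by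
    unfold h₂
    exact mul_le_mul_of_nonneg_left h (inv_nonneg.mpr hC3pos.le)
  refine le_trans ?_ hstep
  have e1 : (C₃ c)⁻¹ * (u * C₃ c - u ^ 3 / 6 * E6) = u - u ^ 3 / 6 * (E6 / C₃ c) := by
    field_simp
  rw [e1]
  have hfrac : E6 / C₃ c ≤ 240 := by
    have h1 : E6 / C₃ c ≤ E6 * Λ ^ 2 := by
      rw [div_le_iff₀ hC3pos]
      calc E6 = E6 * (Λ ^ 2 * (1 / Λ ^ 2)) := by field_simp
        _ ≤ E6 * (Λ ^ 2 * C₃ c) := by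
            apply mul_le_mul_of_nonneg_left _ hE6nn
            exact mul_le_mul_of_nonneg_left hC3 (by positivity)
        _ = E6 * Λ ^ 2 * C₃ c := by ring
    have h2 : E6 * Λ ^ 2 ≤ (15 / c ^ 2) * (16 * c ^ 2) := by
      apply mul_le_mul hE6 _ (by positivity) (by positivity)
      nlinarith
    calc E6 / C₃ c ≤ E6 * Λ ^ 2 := h1
      _ ≤ (15 / c ^ 2) * (16 * c ^ 2) := h2
      _ = 240 := by field_simp; ring
  nlinarith [pow_nonneg hu 3]


lemma aux_rt {r t : ℝ} (hr : r ≤ 48) (hr0 : 0 ≤ r) (htl : -(51 / 49) ≤ t) (ht0 : t ≤ 0) :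
    -50 ≤ r * t := by
  nlinarith [mul_nonneg (sub_nonneg.mpr hr) (neg_nonneg.mpr ht0)]

lemma aux_lower {p s2 x : ℝ} (hp : 9.86 ≤ p) (hs2 : 0 ≤ s2) (hx : 100 ≤ x) :
    p / 8 * (1 + s2) * x + 20 * (1 + s2) + 50 ≤ p / 4 * (1 + s2) * x := by
  nlinarith [mul_nonneg hs2 (by linarith : (0:ℝ) ≤ x - 100),
    mul_nonneg (mul_nonneg (by linarith : (0:ℝ) ≤ p - 9.86)
      (by positivity : (0:ℝ) ≤ 1 + s2)) (by linarith : (0:ℝ) ≤ x)]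

lemma aux_u3 {u : ℝ} (hu0 : 0 < u) (hu2 : u ^ 2 ≤ 1 / 100) : u ^ 3 ≤ 1 / 100 * u := by
  nlinarith


set_option maxHeartbeats 1000000 in
/-- If `x ≥ 100` then
`(π²/8)·((1+σ²)/c)·x + 20(1+σ²)/c ≤ h_sgn(x) ≤ (π²/2)·((1+σ²)/c)·x + 20(1+σ²)/c`,
where `c = C(Λ)` solves `1/Λ = E[W²/(c+W²)]` and `Λ ≥ 10`. -/
theorem statement17 (Λ c σ : ℝ) (hΛ : 10 ≤ Λ) (hc : 0 < c) (hσ : 0 ≤ σ)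
    (hfix : 1 / Λ = ∫ w, w ^ 2 / (c + w ^ 2) ∂(gaussianReal 0 1))
    (x : ℝ) (hx : 100 ≤ x) :
    Real.pi ^ 2 / 8 * ((1 + σ ^ 2) / c) * x + 20 * (1 + σ ^ 2) / c ≤ hsgn Λ c σ x ∧
      hsgn Λ c σ x ≤ Real.pi ^ 2 / 2 * ((1 + σ ^ 2) / c) * x + 20 * (1 + σ ^ 2) / c := by
  have hΛ0 : (0:ℝ) < Λ := by linarith
  have hI := hfix.symm
  have hc4 := c_ge_4 hΛ hc hfix
  have h4c := Lam_le_4c hΛ hc hfix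
  have hx0 : (0:ℝ) < x := by linarith
  have hsx : (10:ℝ) ≤ Real.sqrt x := by
    rw [show (10:ℝ) = Real.sqrt 100 by
      rw [show (100:ℝ) = 10 ^ 2 by norm_num, Real.sqrt_sq (by norm_num : (0:ℝ) ≤ 10)]]
    exact Real.sqrt_le_sqrt hx
  have hsxpos : 0 < Real.sqrt x := by linarith
  set u : ℝ := 1 / Real.sqrt x with hu_def
  have hu0 : 0 < u := by positivity
  have hu10 : u ≤ 1 / 10 := by
    rw [hu_def, div_le_div_iff₀ hsxpos (by norm_num)]
    linarith
  have hu2 : u ^ 2 = 1 / x := by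
    rw [hu_def, div_pow, one_pow, Real.sq_sqrt hx0.le]
  have hu2' : u ^ 2 ≤ 1 / 100 := by
    rw [hu2, div_le_div_iff₀ hx0 (by norm_num)]
    linarith
  have hu3 : u ^ 3 ≤ 1 / 100 * u := aux_u3 hu0 hu2'
  -- h1 bounds
  have hh1le : h₁ Λ c u ≤ u := h1_le hc hΛ0 hu0.le hI
  have hh1ge0 : u - 2 * u ^ 3 ≤ h₁ Λ c u := h1_ge hc hΛ0 hu0.le h4c hI
  have hh1ge : 49 / 50 * u ≤ h₁ Λ c u := by linarith
  have hh1pos : 0 < h₁ Λ c u := by linarith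
  -- C bounds
  have hC2ge := C2_ge hc hΛ0 hI
  have hC3ge := C3_ge hc hΛ0 hI
  have hC2pos : 0 < C₂ c := lt_of_lt_of_le (by positivity) hC2ge
  have hC3pos : 0 < C₃ c := lt_of_lt_of_le (by positivity) hC3ge
  have hC3le := C3_le hc
  have hr : C₃ c / C₂ c ≤ 48 := by
    have h1 : C₃ c / C₂ c ≤ C₃ c * Λ ^ 2 := by
      rw [div_le_iff₀ hC2pos]
      calc C₃ c = C₃ c * (Λ ^ 2 * (1 / Λ ^ 2)) := by field_simp
        _ ≤ C₃ c * (Λ ^ 2 * C₂ c) := by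
            apply mul_le_mul_of_nonneg_left _ hC3pos.le
            exact mul_le_mul_of_nonneg_left hC2ge (by positivity)
        _ = C₃ c * Λ ^ 2 * C₂ c := by ring
    have h2 : C₃ c * Λ ^ 2 ≤ (3 / c ^ 2) * (16 * c ^ 2) := by
      apply mul_le_mul hC3le _ (by positivity) (by positivity)
      nlinarith
    have h3 : (3 / c ^ 2) * (16 * c ^ 2) = 48 := by field_simp; ring
    linarith
  have hrpos : 0 ≤ C₃ c / C₂ c := div_nonneg hC3pos.le hC2pos.le
  -- h2 bounds
  have hh2le : h₂ c u ≤ u := h2_le hc hu0.le hC3pos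
  have hh2ge0 : u - 40 * u ^ 3 ≤ h₂ c u := h2_ge hc hΛ0 hu0.le h4c hC3ge
  have hh2ge : 3 / 5 * u ≤ h₂ c u := by linarith
  clear hfix hI hC2ge hC3ge hC3le hc4 h4c hΛ hΛ0 hh1ge0 hh2ge0 hu3
  -- ratio bounds
  have hq_le : h₂ c u / h₁ Λ c u ≤ 50 / 49 := by
    rw [div_le_div_iff₀ hh1pos (by norm_num)]
    linarith
  have hq_ge : 3 / 5 ≤ h₂ c u / h₁ Λ c u := by
    rw [le_div_iff₀ hh1pos]
    linarith
  have ht2 : 2 * h₂ c u / h₁ Λ c u = 2 * (h₂ c u / h₁ Λ c u) := by ring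
  set t : ℝ := 1 - 2 * h₂ c u / h₁ Λ c u with ht_def
  have ht_le : t ≤ 0 := by rw [ht_def, ht2]; linarith
  have ht_ge : -(51 / 49) ≤ t := by rw [ht_def, ht2]; linarith
  -- Term2 bounds
  have hrt : -50 ≤ C₃ c / C₂ c * t := aux_rt hr hrpos ht_ge ht_le
  have hT2ge : -(50 / c) ≤ 1 / c * (C₃ c / C₂ c) * t := by
    have h0 : 0 ≤ 1 / c * (C₃ c / C₂ c * t + 50) := mul_nonneg (by positivity) (by linarith)
    have e : 1 / c * (C₃ c / C₂ c * t + 50) = 1 / c * (C₃ c / C₂ c) * t + 50 / c := by ring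
    linarith [e ▸ h0]
  have hT2le : 1 / c * (C₃ c / C₂ c) * t ≤ 0 := by
    have h0 : 0 ≤ 1 / c * (C₃ c / C₂ c) * (-t) :=
      mul_nonneg (mul_nonneg (by positivity) hrpos) (by linarith)
    linarith
  -- Term1 bounds
  have hh1sq_le : (h₁ Λ c u) ^ 2 ≤ u ^ 2 := pow_le_pow_left₀ hh1pos.le hh1le 2
  have hh1sq_ge : (49 / 50 * u) ^ 2 ≤ (h₁ Λ c u) ^ 2 :=
    pow_le_pow_left₀ (by positivity) hh1ge 2
  have hT1ge : Real.pi ^ 2 / 4 * ((1 + σ ^ 2) / c) * x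
      ≤ Real.pi ^ 2 / 4 * ((1 + σ ^ 2) / c) / (h₁ Λ c u) ^ 2 := by
    have h1 : Real.pi ^ 2 / 4 * ((1 + σ ^ 2) / c) / u ^ 2
        ≤ Real.pi ^ 2 / 4 * ((1 + σ ^ 2) / c) / (h₁ Λ c u) ^ 2 := by
      gcongr
    refine le_trans (le_of_eq ?_) h1
    rw [hu2]
    rw [div_eq_mul_inv _ (1/x), one_div, inv_inv]
  have hT1le : Real.pi ^ 2 / 4 * ((1 + σ ^ 2) / c) / (h₁ Λ c u) ^ 2
      ≤ 2500 / 2401 * (Real.pi ^ 2 / 4 * ((1 + σ ^ 2) / c)) * x := by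
    have h1 : Real.pi ^ 2 / 4 * ((1 + σ ^ 2) / c) / (h₁ Λ c u) ^ 2
        ≤ Real.pi ^ 2 / 4 * ((1 + σ ^ 2) / c) / (49 / 50 * u) ^ 2 := by
      gcongr
    refine h1.trans (le_of_eq ?_)
    have e : (49 / 50 * u) ^ 2 = 2401 / 2500 * u ^ 2 := by ring
    rw [e, hu2]
    field_simp
  have hπ : (9.86:ℝ) ≤ Real.pi ^ 2 := by nlinarith [Real.pi_gt_d6]
  rw [show hsgn Λ c σ x = Real.pi ^ 2 / 4 * ((1 + σ ^ 2) / c) / (h₁ Λ c u) ^ 2 +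
      1 / c * (C₃ c / C₂ c) * t from rfl]
  constructor
  · -- lower bound
    have inner := aux_lower hπ (by positivity : (0:ℝ) ≤ σ ^ 2) hx
    have h0 := mul_le_mul_of_nonneg_left inner (by positivity : (0:ℝ) ≤ 1 / c)
    have e1 : 1 / c * (Real.pi ^ 2 / 8 * (1 + σ ^ 2) * x + 20 * (1 + σ ^ 2) + 50)
        = Real.pi ^ 2 / 8 * ((1 + σ ^ 2) / c) * x + 20 * (1 + σ ^ 2) / c + 50 / c := by
      ring
    have e2 : 1 / c * (Real.pi ^ 2 / 4 * (1 + σ ^ 2) * x)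
        = Real.pi ^ 2 / 4 * ((1 + σ ^ 2) / c) * x := by ring
    rw [e1, e2] at h0
    linarith
  · -- upper bound
    have key : 2500 / 2401 * (Real.pi ^ 2 / 4 * ((1 + σ ^ 2) / c)) * x
        ≤ Real.pi ^ 2 / 2 * ((1 + σ ^ 2) / c) * x := by
      have h0 : (0:ℝ) ≤ (Real.pi ^ 2 * ((1 + σ ^ 2) / c)) * x := by positivity
      nlinarith
    have h20 : (0:ℝ) ≤ 20 * (1 + σ ^ 2) / c := by positivity
    linarith
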